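/- Let R be an associative ring that decomposes as a sum R = A + B of two Lie nilpotent subrings A and B (the sum being as additive subgroups). If at least one of A, B is a one-sided (left or right) ideal of R, then R is Lie solvable. -/

import Mathlib

/-- `I` is a right ideal of `R` (as an additive subgroup closed under right multiplication). -/
def IsRightIdealSG {R : Type*} [Ring R] (I : AddSubgroup R) : Prop :=
  ∀ i ∈ I, ∀ r : R, i * r ∈ I

/-- `I` is a left ideal of `R`. -/
def IsLeftIdealSG {R : Type*} [Ring R] (I : AddSubgroup R) : Prop :=
  ∀ i ∈ I, ∀ r : R, r * i ∈ I

/-- `I` is a two-sided ideal of `R`. -/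
def IsIdealSG {R : Type*} [Ring R] (I : AddSubgroup R) : Prop :=
  IsLeftIdealSG I ∧ IsRightIdealSG I

/-- Left-normed iterated commutator: `itComm s n = [[...[s 0, s 1],...], s n]`
(a left-normed commutator of `n + 1` elements). -/
def itComm {R : Type*} [Ring R] (s : ℕ → R) : ℕ → R
  | 0 => s 0
  | n + 1 => itComm s n * s (n + 1) - s (n + 1) * itComm s n

/-- `S` is Lie nilpotent of class ≤ m : every left-normed commutator of `m + 1`
elements of `S` vanishes. -/
def LieNilpotentClassLe {R : Type*} [Ring R] (S : Set R) (m : ℕ) : Prop :=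
  ∀ s : ℕ → R, (∀ n, s n ∈ S) → itComm s m = 0

/-- The Lie derived series of an additive subgroup `S` of a ring:
`D 0 = S`, `D (k+1)` = additive span of `[D k, D k]`. -/
def derSeries {R : Type*} [Ring R] (S : AddSubgroup R) : ℕ → AddSubgroup R
  | 0 => S
  | n + 1 => AddSubgroup.closure
      {x | ∃ a ∈ derSeries S n, ∃ b ∈ derSeries S n, x = a * b - b * a}

/-- `R^(−)_n`: the additive subgroup generated by all left-normed commutators of
`n` elements of `R`. -/
def lcs (R : Type*) [Ring R] (n : ℕ) : AddSubgroup R :=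
  AddSubgroup.closure {x | ∃ s : ℕ → R, x = itComm s (n - 1)}

/-- `R_n = R^(−)_n + R^(−)_n · R`, a two-sided ideal of `R`. -/
def Rn (R : Type*) [Ring R] (n : ℕ) : AddSubgroup R :=
  lcs R n ⊔ AddSubgroup.closure {x | ∃ c ∈ lcs R n, ∃ r : R, x = c * r}

/-- The additive span of `k`-fold products of elements of `S`. -/
def spanPow {R : Type*} [Ring R] (S : Set R) (k : ℕ) : AddSubgroup R :=
  AddSubgroup.closure {x | ∃ l : List R, l.length = k ∧ (∀ a ∈ l, a ∈ S) ∧ x = l.prod}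

/-- `J` is nilpotent: all `k`-fold products of its elements vanish for some `k > 0`. -/
def IsNilpotentSG {R : Type*} [Ring R] (J : AddSubgroup R) : Prop :=
  ∃ k : ℕ, 0 < k ∧ ∀ l : List R, l.length = k → (∀ a ∈ l, a ∈ J) → l.prod = 0

/-- `R` is semiprime: it has no nonzero nilpotent two-sided ideals. -/
def IsSemiprimeRing (R : Type*) [Ring R] : Prop :=
  ∀ J : AddSubgroup R, IsIdealSG J → IsNilpotentSG J → J = ⊥

section LieSolvableProof

open AddSubgroup

set_option linter.unusedSectionVars false
set_option linter.unusedVariables false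
set_option maxHeartbeats 1000000

namespace Work
variable {R : Type*} [Ring R]




/-- lower central series of the subring `S` -/
def lam (S : AddSubgroup R) : ℕ → AddSubgroup R
  | 0 => S
  | k + 1 => closure {x | ∃ g ∈ lam S k, ∃ b ∈ S, x = g * b - b * g}

theorem lam_le (S : AddSubgroup R) (hS : ∀ a ∈ S, ∀ b ∈ S, a * b ∈ S) :
    ∀ k, lam S k ≤ S := by
  intro k
  induction k with
  | zero => exact le_rfl
  | succ k ih =>
    refine (closure_le _).2 ?_
    rintro x ⟨g, hg, b, hb, rfl⟩
    exact sub_mem (hS _ (ih hg) _ hb) (hS _ hb _ (ih hg))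

theorem lam_bracket (S : AddSubgroup R) :
    ∀ j i, ∀ x ∈ lam S i, ∀ y ∈ lam S j, x * y - y * x ∈ lam S (i + j + 1) := by
  intro j
  induction j with
  | zero =>
    intro i x hx y hy
    exact subset_closure ⟨x, hx, y, hy, rfl⟩
  | succ j ih =>
    intro i x hx y hy
    have key : lam S (j+1) ≤
        (lam S (i + (j+1) + 1)).comap (AddMonoidHom.mulLeft x - AddMonoidHom.mulRight x) := by
      refine (closure_le _).2 ?_
      rintro w ⟨g, hg, b, hb, rfl⟩
      have h1 : x * g - g * x ∈ lam S (i + j + 1) := ih i x hx g hg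
      have h3 : (x*g - g*x) * b - b * (x*g - g*x) ∈ lam S (i + j + 1 + 1) :=
        subset_closure ⟨_, h1, b, hb, rfl⟩
      have h2 : x * b - b * x ∈ lam S (i + 1) := subset_closure ⟨x, hx, b, hb, rfl⟩
      have h4 : (x*b - b*x) * g - g * (x*b - b*x) ∈ lam S ((i+1) + j + 1) :=
        ih (i+1) _ h2 g hg
      have e1 : i + j + 1 + 1 = i + (j+1) + 1 := by omega
      have e2 : (i+1) + j + 1 = i + (j+1) + 1 := by omega
      rw [e1] at h3; rw [e2] at h4
      have : (AddMonoidHom.mulLeft x - AddMonoidHom.mulRight x) (g * b - b * g)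
          = ((x*g - g*x) * b - b * (x*g - g*x)) - ((x*b - b*x) * g - g * (x*b - b*x)) := by
        simp only [AddMonoidHom.sub_apply, AddMonoidHom.coe_mulLeft, AddMonoidHom.coe_mulRight]
        noncomm_ring
      exact mem_comap.2 (this ▸ sub_mem h3 h4)
    have := key hy
    simpa using this

theorem derSeries_le_lam (S : AddSubgroup R) :
    ∀ d, derSeries S d ≤ lam S (2 ^ d - 1) := by
  intro d
  induction d with
  | zero => exact le_rfl
  | succ d ih =>
    refine (closure_le _).2 ?_
    rintro x ⟨a, ha, b, hb, rfl⟩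
    have h := lam_bracket S (2^d - 1) (2^d - 1) a (ih ha) b (ih hb)
    have e : 2^d - 1 + (2^d - 1) + 1 = 2^(d+1) - 1 := by
      have : 1 ≤ 2^d := Nat.one_le_two_pow
      have : 2^(d+1) = 2^d + 2^d := by ring
      omega
    rwa [e] at h

theorem itComm_congr (s t : ℕ → R) : ∀ k, (∀ i ≤ k, s i = t i) → itComm s k = itComm t k := by
  intro k
  induction k with
  | zero => intro h; exact h 0 (le_refl 0)
  | succ k ih =>
    intro h
    have h1 : itComm s k = itComm t k := ih (fun i hi => h i (Nat.le_succ_of_le hi))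
    have h2 : s (k+1) = t (k+1) := h (k+1) le_rfl
    show itComm s k * s (k+1) - s (k+1) * itComm s k = _
    rw [h1, h2]; rfl

theorem lam_le_itSpan (S : AddSubgroup R) :
    ∀ k, lam S k ≤ closure {x | ∃ s : ℕ → R, (∀ i, s i ∈ S) ∧ x = itComm s k} := by
  intro k
  induction k with
  | zero =>
    intro x hx
    exact subset_closure ⟨fun _ => x, fun _ => hx, rfl⟩
  | succ k ih =>
    refine (closure_le _).2 ?_
    rintro x ⟨g, hg, b, hb, rfl⟩
    have hg' := ih hg
    have key : closure {x | ∃ s : ℕ → R, (∀ i, s i ∈ S) ∧ x = itComm s k} ≤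
        (closure {x | ∃ s : ℕ → R, (∀ i, s i ∈ S) ∧ x = itComm s (k+1)}).comap
          (AddMonoidHom.mulRight b - AddMonoidHom.mulLeft b) := by
      refine (closure_le _).2 ?_
      rintro w ⟨s, hs, rfl⟩
      refine mem_comap.2 (subset_closure ?_)
      refine ⟨fun i => if i ≤ k then s i else b, fun i => ?_, ?_⟩
      · by_cases hi : i ≤ k <;> simp [hi, hs i, hb]
      · have h1 : itComm (fun i => if i ≤ k then s i else b) k = itComm s k :=
          itComm_congr _ _ k (fun i hi => by simp [hi])
        show _ = itComm _ k * _ - _ * itComm _ k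
        rw [h1]
        simp only [AddMonoidHom.sub_apply, AddMonoidHom.coe_mulRight, AddMonoidHom.coe_mulLeft]
        have : ¬ (k+1 ≤ k) := by omega
        rw [if_neg this]
    simpa using key hg'

theorem lam_class_bot (S : AddSubgroup R) {c : ℕ} (hS : LieNilpotentClassLe (S : Set R) c) :
    lam S c = ⊥ := by
  refine le_antisymm ?_ bot_le
  refine le_trans (lam_le_itSpan S c) ?_
  refine (closure_le _).2 ?_
  rintro x ⟨s, hs, rfl⟩
  simp [hS s hs]

theorem lam_bot_add (S : AddSubgroup R) {c : ℕ} (h : lam S c = ⊥) :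
    ∀ j, lam S (c + j) = ⊥ := by
  intro j
  induction j with
  | zero => exact h
  | succ j ih =>
    refine le_antisymm ?_ bot_le
    refine (closure_le _).2 ?_
    rintro x ⟨g, hg, b, hb, rfl⟩
    have hg' : g ∈ lam S (c + j) := hg
    rw [ih] at hg'
    simp only [mem_bot] at hg'
    subst hg'
    simp

/-- Lie nilpotent of class ≤ c implies derived length ≤ c. -/
theorem derSeries_bot_of_class (S : AddSubgroup R) {c : ℕ}
    (hS : LieNilpotentClassLe (S : Set R) c) : derSeries S c = ⊥ := by
  refine le_antisymm ?_ bot_le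
  refine le_trans (derSeries_le_lam S c) ?_
  have h1 : lam S c = ⊥ := lam_class_bot S hS
  have h2 : c ≤ 2 ^ c - 1 := by
    have := Nat.lt_two_pow_self (n := c)
    omega
  have : lam S (c + (2^c - 1 - c)) = ⊥ := lam_bot_add S h1 _
  have e : c + (2^c - 1 - c) = 2^c - 1 := by omega
  rw [e] at this
  rw [this]



theorem mul_mem_of_gen_left {Q : Set R} {J : AddSubgroup R} (x : R) {y : R}
    (hy : y ∈ closure Q) (h : ∀ q ∈ Q, x * q ∈ J) : x * y ∈ J := by
  have : closure Q ≤ J.comap (AddMonoidHom.mulLeft x) :=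
    (closure_le _).2 (fun q hq => by simpa using h q hq)
  simpa using this hy

theorem mul_mem_of_gen_right {Q : Set R} {J : AddSubgroup R} (y : R) {x : R}
    (hx : x ∈ closure Q) (h : ∀ q ∈ Q, q * y ∈ J) : x * y ∈ J := by
  have : closure Q ≤ J.comap (AddMonoidHom.mulRight y) :=
    (closure_le _).2 (fun q hq => by simpa using h q hq)
  simpa using this hx

/-- generating set for the two-sided ideal generated by `Z`. -/
def genSet (Z : AddSubgroup R) : Set R :=
  {x | ∃ z ∈ Z, x = z ∨ (∃ v, x = z * v) ∨ (∃ u, x = u * z) ∨ (∃ u v, x = u * z * v)}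

/-- the two-sided ideal generated by (the carrier of) `Z`. -/
def genIdeal (Z : AddSubgroup R) : AddSubgroup R := closure (genSet Z)

theorem genSet_le {Z : AddSubgroup R} {x : R} (h : x ∈ genSet Z) : x ∈ genIdeal Z :=
  subset_closure h

theorem mem_genSet {Z : AddSubgroup R} {x : R} :
    x ∈ genSet Z ↔ ∃ z ∈ Z, x = z ∨ (∃ v, x = z * v) ∨ (∃ u, x = u * z) ∨ (∃ u v, x = u * z * v) :=
  Iff.rfl

theorem le_genIdeal (Z : AddSubgroup R) : Z ≤ genIdeal Z :=
  fun z hz => genSet_le ⟨z, hz, Or.inl rfl⟩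

theorem genIdeal_mul_left (Z : AddSubgroup R) (r : R) {x : R} (hx : x ∈ genIdeal Z) :
    r * x ∈ genIdeal Z := by
  refine mul_mem_of_gen_left (Q := genSet Z) r hx ?_
  intro q hq
  obtain ⟨z, hz, (rfl | ⟨v, rfl⟩ | ⟨u, rfl⟩ | ⟨u, v, rfl⟩)⟩ := mem_genSet.1 hq
  · exact genSet_le ⟨q, hz, Or.inr (Or.inr (Or.inl ⟨r, rfl⟩))⟩
  · exact genSet_le ⟨z, hz, Or.inr (Or.inr (Or.inr ⟨r, v, by rw [mul_assoc]⟩))⟩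
  · exact genSet_le ⟨z, hz, Or.inr (Or.inr (Or.inl ⟨r * u, by rw [mul_assoc]⟩))⟩
  · exact genSet_le ⟨z, hz, Or.inr (Or.inr (Or.inr ⟨r * u, v,
      by rw [mul_assoc, mul_assoc, mul_assoc]⟩))⟩

theorem genIdeal_mul_right (Z : AddSubgroup R) (r : R) {x : R} (hx : x ∈ genIdeal Z) :
    x * r ∈ genIdeal Z := by
  refine mul_mem_of_gen_right (Q := genSet Z) r hx ?_
  intro q hq
  obtain ⟨z, hz, (rfl | ⟨v, rfl⟩ | ⟨u, rfl⟩ | ⟨u, v, rfl⟩)⟩ := mem_genSet.1 hq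
  · exact genSet_le ⟨q, hz, Or.inr (Or.inl ⟨r, rfl⟩)⟩
  · exact genSet_le ⟨z, hz, Or.inr (Or.inl ⟨v * r, by rw [mul_assoc]⟩)⟩
  · exact genSet_le ⟨z, hz, Or.inr (Or.inr (Or.inr ⟨u, r, rfl⟩))⟩
  · exact genSet_le ⟨z, hz, Or.inr (Or.inr (Or.inr ⟨u, v * r, by rw [mul_assoc, mul_assoc]⟩))⟩

theorem genIdeal_bot : genIdeal (⊥ : AddSubgroup R) = ⊥ := by
  refine le_antisymm ?_ bot_le
  refine (closure_le _).2 ?_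
  intro q hq
  obtain ⟨z, hz, h⟩ := mem_genSet.1 hq
  simp only [mem_bot] at hz
  subst hz
  rcases h with (rfl | ⟨v, rfl⟩ | ⟨u, rfl⟩ | ⟨u, v, rfl⟩) <;> simp

theorem genIdeal_mono {Z Z' : AddSubgroup R} (h : Z ≤ Z') : genIdeal Z ≤ genIdeal Z' := by
  refine (closure_le _).2 ?_
  intro q hq
  obtain ⟨z, hz, hq'⟩ := mem_genSet.1 hq
  exact genSet_le ⟨z, h hz, hq'⟩


/-- generating set for the ideal generated by `[Z,R]`, left-ideal version
(commutators, with optional right multiplier). -/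
def brSetL (Z : AddSubgroup R) : Set R :=
  {x | ∃ z ∈ Z, ∃ y : R, x = z * y - y * z ∨ ∃ r : R, x = (z * y - y * z) * r}

def brIdealL (Z : AddSubgroup R) : AddSubgroup R := closure (brSetL Z)

theorem mem_brSetL {Z : AddSubgroup R} {x : R} :
    x ∈ brSetL Z ↔ ∃ z ∈ Z, ∃ y : R, x = z * y - y * z ∨ ∃ r : R, x = (z * y - y * z) * r :=
  Iff.rfl

theorem brSetL_le {Z : AddSubgroup R} {x : R} (h : x ∈ brSetL Z) : x ∈ brIdealL Z :=
  subset_closure h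

theorem brL_mem (Z : AddSubgroup R) {z : R} (hz : z ∈ Z) (y : R) :
    z * y - y * z ∈ brIdealL Z := brSetL_le ⟨z, hz, y, Or.inl rfl⟩

theorem brL_mem' (Z : AddSubgroup R) {z : R} (hz : z ∈ Z) (y r : R) :
    (z * y - y * z) * r ∈ brIdealL Z := brSetL_le ⟨z, hz, y, Or.inr ⟨r, rfl⟩⟩

theorem brIdealL_mul_right (Z : AddSubgroup R) (r : R) {x : R} (hx : x ∈ brIdealL Z) :
    x * r ∈ brIdealL Z := by
  refine mul_mem_of_gen_right (Q := brSetL Z) r hx ?_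
  intro q hq
  obtain ⟨z, hz, y, (rfl | ⟨s, rfl⟩)⟩ := mem_brSetL.1 hq
  · exact brL_mem' Z hz y r
  · have : (z * y - y * z) * s * r = (z * y - y * z) * (s * r) := by rw [mul_assoc]
    rw [this]
    exact brL_mem' Z hz y (s * r)

theorem brIdealL_mul_left (Z : AddSubgroup R) (r : R) {x : R} (hx : x ∈ brIdealL Z) :
    r * x ∈ brIdealL Z := by
  refine mul_mem_of_gen_left (Q := brSetL Z) r hx ?_
  intro q hq
  obtain ⟨z, hz, y, (rfl | ⟨s, rfl⟩)⟩ := mem_brSetL.1 hq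
  · -- r * [z,y] = [z, r*y] - [z,r]*y
    have key : r * (z * y - y * z) =
        (z * (r * y) - (r * y) * z) - (z * r - r * z) * y := by noncomm_ring
    rw [key]
    exact sub_mem (brL_mem Z hz (r * y)) (brL_mem' Z hz r y)
  · -- r * ([z,y]*s) = [z,r*y]*s - [z,r]*(y*s)
    have key : r * ((z * y - y * z) * s) =
        (z * (r * y) - (r * y) * z) * s - (z * r - r * z) * (y * s) := by noncomm_ring
    rw [key]
    exact sub_mem (brL_mem' Z hz (r * y) s) (brL_mem' Z hz r (y * s))


theorem mul_mem_of_gen {P Q : Set R} {J : AddSubgroup R} {x y : R}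
    (hx : x ∈ closure P) (hy : y ∈ closure Q)
    (h : ∀ p ∈ P, ∀ q ∈ Q, p * q ∈ J) : x * y ∈ J := by
  refine mul_mem_of_gen_right (Q := P) y hx ?_
  intro p hp
  exact mul_mem_of_gen_left (Q := Q) p hy (fun q hq => h p hp q hq)

section LeftAbstract

variable {B Z H : AddSubgroup R}
variable (hBleft : ∀ b ∈ B, ∀ r : R, r * b ∈ B)
variable (hZB : Z ≤ B) (hbr : ∀ z ∈ Z, ∀ b ∈ B, z * b - b * z ∈ H)

include hBleft hZB hbr in
theorem S1L : ∀ z ∈ Z, ∀ x : R, ∀ b ∈ B, (z * x - x * z) * b ∈ genIdeal H := by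
  intro z hz x b hb
  have h1 : z * (x * b) - (x * b) * z ∈ H := hbr z hz _ (hBleft b hb x)
  have h2 : z * b - b * z ∈ H := hbr z hz b hb
  have key : (z * x - x * z) * b = (z * (x * b) - (x * b) * z) - x * (z * b - b * z) := by
    noncomm_ring
  rw [key]
  exact sub_mem (le_genIdeal H h1) (genIdeal_mul_left H x (le_genIdeal H h2))

include hBleft hZB hbr in
theorem C1L : ∀ z ∈ Z, ∀ z' ∈ Z, ∀ x y : R,
    (z * x - x * z) * (z' * y - y * z') ∈ genIdeal H := by
  intro z hz z' hz' x y
  have h1 : (z * x - x * z) * z' ∈ genIdeal H := S1L hBleft hZB hbr z hz x z' (hZB hz')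
  have h2 : (z * x - x * z) * (y * z') ∈ genIdeal H :=
    S1L hBleft hZB hbr z hz x (y * z') (hBleft z' (hZB hz') y)
  have key : (z * x - x * z) * (z' * y - y * z') =
      ((z * x - x * z) * z') * y - (z * x - x * z) * (y * z') := by noncomm_ring
  rw [key]
  exact sub_mem (genIdeal_mul_right H y h1) h2

include hBleft hZB hbr in
theorem KKL : ∀ {x}, x ∈ brIdealL Z → ∀ {y}, y ∈ brIdealL Z → x * y ∈ genIdeal H := by
  have c1 := C1L hBleft hZB hbr
  -- first: the "case c" core: ([z,x]*r)*[z',y] ∈ I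
  have hc : ∀ z ∈ Z, ∀ z' ∈ Z, ∀ x r y : R,
      ((z * x - x * z) * r) * (z' * y - y * z') ∈ genIdeal H := by
    intro z hz z' hz' x r y
    have h1 := c1 z hz z' hz' x (r * y)
    have h2 : ((z * x - x * z) * (z' * r - r * z')) * y ∈ genIdeal H :=
      genIdeal_mul_right H y (c1 z hz z' hz' x r)
    have key : ((z * x - x * z) * r) * (z' * y - y * z') =
        (z * x - x * z) * (z' * (r * y) - (r * y) * z')
          - ((z * x - x * z) * (z' * r - r * z')) * y := by noncomm_ring
    rw [key]
    exact sub_mem h1 h2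
  intro x hx y hy
  refine mul_mem_of_gen hx hy ?_
  intro p hp q hq
  obtain ⟨z, hz, x0, (rfl | ⟨r, rfl⟩)⟩ := mem_brSetL.1 hp
  · obtain ⟨z', hz', y0, (rfl | ⟨r', rfl⟩)⟩ := mem_brSetL.1 hq
    · exact c1 z hz z' hz' x0 y0
    · have key : (z * x0 - x0 * z) * ((z' * y0 - y0 * z') * r') =
          ((z * x0 - x0 * z) * (z' * y0 - y0 * z')) * r' := by rw [mul_assoc]
      rw [key]
      exact genIdeal_mul_right H r' (c1 z hz z' hz' x0 y0)
  · obtain ⟨z', hz', y0, (rfl | ⟨r', rfl⟩)⟩ := mem_brSetL.1 hq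
    · exact hc z hz z' hz' x0 r y0
    · have key : ((z * x0 - x0 * z) * r) * ((z' * y0 - y0 * z') * r') =
          (((z * x0 - x0 * z) * r) * (z' * y0 - y0 * z')) * r' := by
        rw [mul_assoc, mul_assoc, mul_assoc]
      rw [key]
      exact genIdeal_mul_right H r' (hc z hz z' hz' x0 r y0)

include hBleft hZB in
theorem F5L : genIdeal Z ≤ B ⊔ brIdealL Z := by
  refine (closure_le _).2 ?_
  intro q hq
  obtain ⟨z, hz, (rfl | ⟨v, rfl⟩ | ⟨u, rfl⟩ | ⟨u, v, rfl⟩)⟩ := mem_genSet.1 hq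
  · exact mem_sup_left (hZB hz)
  · have key : z * v = v * z + (z * v - v * z) := by noncomm_ring
    rw [key]
    exact add_mem (mem_sup_left (hBleft z (hZB hz) v)) (mem_sup_right (brL_mem Z hz v))
  · exact mem_sup_left (hBleft z (hZB hz) u)
  · have key : u * z * v = (u * v) * z + u * (z * v - v * z) := by noncomm_ring
    rw [key]
    exact add_mem (mem_sup_left (hBleft z (hZB hz) (u * v)))
      (mem_sup_right (brIdealL_mul_left Z u (brL_mem Z hz v)))

end LeftAbstract



/-- two-sided-ideal predicate -/
def IsId (J : AddSubgroup R) : Prop :=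
  (∀ (r : R) {x : R}, x ∈ J → r * x ∈ J) ∧ (∀ (r : R) {x : R}, x ∈ J → x * r ∈ J)

theorem IsId.sup {J1 J2 : AddSubgroup R} (h1 : IsId J1) (h2 : IsId J2) : IsId (J1 ⊔ J2) := by
  constructor
  · intro r x hx
    obtain ⟨y, hy, z, hz, rfl⟩ := (AddSubgroup.mem_sup).1 hx
    rw [mul_add]
    exact add_mem (mem_sup_left (h1.1 r hy)) (mem_sup_right (h2.1 r hz))
  · intro r x hx
    obtain ⟨y, hy, z, hz, rfl⟩ := (AddSubgroup.mem_sup).1 hx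
    rw [add_mul]
    exact add_mem (mem_sup_left (h1.2 r hy)) (mem_sup_right (h2.2 r hz))

/-- derived series chain principle -/
theorem derSeries_chain (T : AddSubgroup R) (E : ℕ → AddSubgroup R) (s : ℕ)
    (h0 : derSeries T s ≤ E 0)
    (hstep : ∀ j, ∀ x ∈ E j, ∀ y ∈ E j, x * y - y * x ∈ E (j + 1)) :
    ∀ j, derSeries T (s + j) ≤ E j := by
  intro j
  induction j with
  | zero => exact h0
  | succ j ih =>
    show derSeries T ((s + j) + 1) ≤ E (j + 1)
    refine (closure_le _).2 ?_
    rintro x ⟨a, ha, b, hb, rfl⟩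
    exact hstep j a (ih ha) b (ih hb)

/-- bracket of a sup with an ideal -/
theorem bracket_sup_step {P P' Q : AddSubgroup R} (hQ : IsId Q)
    (hgen : ∀ p ∈ P, ∀ p' ∈ P, p * p' - p' * p ∈ P') :
    ∀ x ∈ P ⊔ Q, ∀ y ∈ P ⊔ Q, x * y - y * x ∈ P' ⊔ Q := by
  intro x hx y hy
  obtain ⟨p, hp, q, hq, rfl⟩ := (AddSubgroup.mem_sup).1 hx
  obtain ⟨p', hp', q', hq', rfl⟩ := (AddSubgroup.mem_sup).1 hy
  have key : (p + q) * (p' + q') - (p' + q') * (p + q) =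
      (p * p' - p' * p) +
        ((p * q' + q * p' + q * q') - (p' * q + q' * p + q' * q)) := by noncomm_ring
  rw [key]
  refine add_mem (mem_sup_left (hgen p hp p' hp')) (mem_sup_right ?_)
  refine sub_mem (add_mem (add_mem ?_ ?_) ?_) (add_mem (add_mem ?_ ?_) ?_)
  · exact hQ.1 p hq'
  · exact hQ.2 p' hq
  · exact hQ.2 q' hq
  · exact hQ.1 p' hq
  · exact hQ.2 p hq'
  · exact hQ.2 q hq'


theorem core_left (A B : AddSubgroup R)
    (hAmul : ∀ a ∈ A, ∀ b ∈ A, a * b ∈ A) (hBmul : ∀ a ∈ B, ∀ b ∈ B, a * b ∈ B)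
    {m n : ℕ} (hA : LieNilpotentClassLe (A : Set R) m) (hB : LieNilpotentClassLe (B : Set R) n)
    (hsum : A ⊔ B = ⊤) (hBleft : ∀ b ∈ B, ∀ r : R, r * b ∈ B) :
    ∃ s : ℕ, derSeries (⊤ : AddSubgroup R) s = ⊥ := by
  have hlamle : ∀ k, lam B k ≤ B := lam_le B hBmul
  have hbrk : ∀ k, ∀ z ∈ lam B k, ∀ b ∈ B, z * b - b * z ∈ lam B (k + 1) :=
    fun k z hz b hb => subset_closure ⟨z, hz, b, hb, rfl⟩
  have hDA : derSeries A m = ⊥ := derSeries_bot_of_class A hA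
  have hDB : derSeries B n = ⊥ := derSeries_bot_of_class B hB
  have hlamn : lam B n = ⊥ := lam_class_bot B hB
  have hIid : ∀ Z : AddSubgroup R, IsId (genIdeal Z) := fun Z =>
    ⟨fun r _ hx => genIdeal_mul_left Z r hx, fun r _ hx => genIdeal_mul_right Z r hx⟩
  have hKid : ∀ Z : AddSubgroup R, IsId (brIdealL Z) := fun Z =>
    ⟨fun r _ hx => brIdealL_mul_left Z r hx, fun r _ hx => brIdealL_mul_right Z r hx⟩
  -- base step : the derived series enters the ideal generated by B
  have base : derSeries (⊤ : AddSubgroup R) m ≤ genIdeal (lam B 0) := by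
    have h0 : derSeries (⊤ : AddSubgroup R) 0 ≤ A ⊔ genIdeal (lam B 0) := by
      show (⊤ : AddSubgroup R) ≤ _
      rw [← hsum]
      exact sup_le_sup_left (le_genIdeal B) A
    have hchain := derSeries_chain (⊤ : AddSubgroup R)
      (fun j => derSeries A j ⊔ genIdeal (lam B 0)) 0 h0
      (fun j => bracket_sup_step (hIid _)
        (fun p hp p' hp' => subset_closure ⟨p, hp, p', hp', rfl⟩))
    have := hchain m
    rw [zero_add] at this
    simp only [hDA, bot_sup_eq] at this
    exact this
  -- induction step : from the ideal of `lam B k` to the ideal of `lam B (k+1)`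
  have step : ∀ k s, derSeries (⊤ : AddSubgroup R) s ≤ genIdeal (lam B k) →
      derSeries (⊤ : AddSubgroup R) (s + n + 1) ≤ genIdeal (lam B (k + 1)) := by
    intro k s hs
    have hQ : IsId (brIdealL (lam B k) ⊔ genIdeal (lam B (k + 1))) := (hKid _).sup (hIid _)
    have h0 : derSeries (⊤ : AddSubgroup R) s ≤
        derSeries B 0 ⊔ (brIdealL (lam B k) ⊔ genIdeal (lam B (k + 1))) := by
      refine le_trans hs (le_trans (F5L hBleft (hlamle k)) ?_)
      exact sup_le_sup_left le_sup_left B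
    have hchain := derSeries_chain (⊤ : AddSubgroup R)
      (fun j => derSeries B j ⊔ (brIdealL (lam B k) ⊔ genIdeal (lam B (k + 1)))) s h0
      (fun j => bracket_sup_step hQ
        (fun p hp p' hp' => subset_closure ⟨p, hp, p', hp', rfl⟩))
    have hn : derSeries (⊤ : AddSubgroup R) (s + n) ≤
        brIdealL (lam B k) ⊔ genIdeal (lam B (k + 1)) := by
      have := hchain n
      simp only [hDB, bot_sup_eq] at this
      exact this
    have hQQ : ∀ x ∈ brIdealL (lam B k) ⊔ genIdeal (lam B (k + 1)),
        ∀ y ∈ brIdealL (lam B k) ⊔ genIdeal (lam B (k + 1)),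
        x * y ∈ genIdeal (lam B (k + 1)) := by
      intro x hx y hy
      obtain ⟨c, hc, i, hi, rfl⟩ := (AddSubgroup.mem_sup).1 hx
      obtain ⟨c', hc', i', hi', rfl⟩ := (AddSubgroup.mem_sup).1 hy
      have h1 : c * c' ∈ genIdeal (lam B (k + 1)) := KKL hBleft (hlamle k) (hbrk k) hc hc'
      have key : (c + i) * (c' + i') = c * c' + (c * i' + (i * c' + i * i')) := by noncomm_ring
      rw [key]
      exact add_mem h1 (add_mem ((hIid _).1 c hi')
        (add_mem ((hIid _).2 c' hi) ((hIid _).2 i' hi)))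
    show derSeries (⊤ : AddSubgroup R) ((s + n) + 1) ≤ _
    refine (closure_le _).2 ?_
    rintro x ⟨a, ha, b, hb, rfl⟩
    exact sub_mem (hQQ a (hn ha) b (hn hb)) (hQQ b (hn hb) a (hn ha))
  -- iterate
  have iter : ∀ k, derSeries (⊤ : AddSubgroup R) (m + k * (n + 1)) ≤ genIdeal (lam B k) := by
    intro k
    induction k with
    | zero => simpa using base
    | succ k ih =>
      have := step k _ ih
      have e : m + k * (n + 1) + n + 1 = m + (k + 1) * (n + 1) := by ring
      rwa [e] at this
  refine ⟨m + n * (n + 1), ?_⟩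
  have := iter n
  rw [hlamn, genIdeal_bot] at this
  exact le_antisymm this bot_le


/-! ### Right ideal mirror -/

def brSetR (Z : AddSubgroup R) : Set R :=
  {x | ∃ z ∈ Z, ∃ y : R, x = z * y - y * z ∨ ∃ r : R, x = r * (z * y - y * z)}

def brIdealR (Z : AddSubgroup R) : AddSubgroup R := closure (brSetR Z)

theorem mem_brSetR {Z : AddSubgroup R} {x : R} :
    x ∈ brSetR Z ↔ ∃ z ∈ Z, ∃ y : R, x = z * y - y * z ∨ ∃ r : R, x = r * (z * y - y * z) :=
  Iff.rfl

theorem brSetR_le {Z : AddSubgroup R} {x : R} (h : x ∈ brSetR Z) : x ∈ brIdealR Z :=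
  subset_closure h

theorem brR_mem (Z : AddSubgroup R) {z : R} (hz : z ∈ Z) (y : R) :
    z * y - y * z ∈ brIdealR Z := brSetR_le ⟨z, hz, y, Or.inl rfl⟩

theorem brR_mem' (Z : AddSubgroup R) {z : R} (hz : z ∈ Z) (y r : R) :
    r * (z * y - y * z) ∈ brIdealR Z := brSetR_le ⟨z, hz, y, Or.inr ⟨r, rfl⟩⟩

theorem brIdealR_mul_left (Z : AddSubgroup R) (r : R) {x : R} (hx : x ∈ brIdealR Z) :
    r * x ∈ brIdealR Z := by
  refine mul_mem_of_gen_left (Q := brSetR Z) r hx ?_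
  intro q hq
  obtain ⟨z, hz, y, (rfl | ⟨s, rfl⟩)⟩ := mem_brSetR.1 hq
  · exact brR_mem' Z hz y r
  · have : r * (s * (z * y - y * z)) = (r * s) * (z * y - y * z) := by rw [mul_assoc]
    rw [this]
    exact brR_mem' Z hz y (r * s)

theorem brIdealR_mul_right (Z : AddSubgroup R) (r : R) {x : R} (hx : x ∈ brIdealR Z) :
    x * r ∈ brIdealR Z := by
  refine mul_mem_of_gen_right (Q := brSetR Z) r hx ?_
  intro q hq
  obtain ⟨z, hz, y, (rfl | ⟨s, rfl⟩)⟩ := mem_brSetR.1 hq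
  · -- [z,y] * r = [z, y*r] - y*[z,r]
    have key : (z * y - y * z) * r =
        (z * (y * r) - (y * r) * z) - y * (z * r - r * z) := by noncomm_ring
    rw [key]
    exact sub_mem (brR_mem Z hz (y * r)) (brR_mem' Z hz r y)
  · -- (s*[z,y]) * r = s*[z,y*r] - (s*y)*[z,r]
    have key : (s * (z * y - y * z)) * r =
        s * (z * (y * r) - (y * r) * z) - (s * y) * (z * r - r * z) := by noncomm_ring
    rw [key]
    exact sub_mem (brR_mem' Z hz (y * r) s) (brR_mem' Z hz r (s * y))

section RightAbstract

variable {B Z H : AddSubgroup R}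
variable (hBright : ∀ b ∈ B, ∀ r : R, b * r ∈ B)
variable (hZB : Z ≤ B) (hbr : ∀ z ∈ Z, ∀ b ∈ B, z * b - b * z ∈ H)

include hBright hZB hbr in
theorem S1R : ∀ z ∈ Z, ∀ x : R, ∀ b ∈ B, b * (z * x - x * z) ∈ genIdeal H := by
  intro z hz x b hb
  have h1 : z * (b * x) - (b * x) * z ∈ H := hbr z hz _ (hBright b hb x)
  have h2 : z * b - b * z ∈ H := hbr z hz b hb
  have key : b * (z * x - x * z) = (z * (b * x) - (b * x) * z) - (z * b - b * z) * x := by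
    noncomm_ring
  rw [key]
  exact sub_mem (le_genIdeal H h1) (genIdeal_mul_right H x (le_genIdeal H h2))

include hBright hZB hbr in
theorem C1R : ∀ z ∈ Z, ∀ z' ∈ Z, ∀ x y : R,
    (z * x - x * z) * (z' * y - y * z') ∈ genIdeal H := by
  intro z hz z' hz' x y
  have h1 : (z * x) * (z' * y - y * z') ∈ genIdeal H :=
    S1R hBright hZB hbr z' hz' y (z * x) (hBright z (hZB hz) x)
  have h2 : z * (z' * y - y * z') ∈ genIdeal H :=
    S1R hBright hZB hbr z' hz' y z (hZB hz)
  have key : (z * x - x * z) * (z' * y - y * z') =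
      (z * x) * (z' * y - y * z') - x * (z * (z' * y - y * z')) := by noncomm_ring
  rw [key]
  exact sub_mem h1 (genIdeal_mul_left H x h2)

include hBright hZB hbr in
theorem KKR : ∀ {x}, x ∈ brIdealR Z → ∀ {y}, y ∈ brIdealR Z → x * y ∈ genIdeal H := by
  have c1 := C1R hBright hZB hbr
  -- case b core : [z,x] * (r' * [z',y]) ∈ I
  have hb : ∀ z ∈ Z, ∀ z' ∈ Z, ∀ x r y : R,
      (z * x - x * z) * (r * (z' * y - y * z')) ∈ genIdeal H := by
    intro z hz z' hz' x r y
    have h1 := c1 z hz z' hz' (x * r) y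
    have h2 : x * ((z * r - r * z) * (z' * y - y * z')) ∈ genIdeal H :=
      genIdeal_mul_left H x (c1 z hz z' hz' r y)
    have key : (z * x - x * z) * (r * (z' * y - y * z')) =
        (z * (x * r) - (x * r) * z) * (z' * y - y * z')
          - x * ((z * r - r * z) * (z' * y - y * z')) := by noncomm_ring
    rw [key]
    exact sub_mem h1 h2
  intro x hx y hy
  refine mul_mem_of_gen hx hy ?_
  intro p hp q hq
  obtain ⟨z, hz, x0, (rfl | ⟨r, rfl⟩)⟩ := mem_brSetR.1 hp
  · obtain ⟨z', hz', y0, (rfl | ⟨r', rfl⟩)⟩ := mem_brSetR.1 hq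
    · exact c1 z hz z' hz' x0 y0
    · exact hb z hz z' hz' x0 r' y0
  · obtain ⟨z', hz', y0, (rfl | ⟨r', rfl⟩)⟩ := mem_brSetR.1 hq
    · have key : (r * (z * x0 - x0 * z)) * (z' * y0 - y0 * z') =
          r * ((z * x0 - x0 * z) * (z' * y0 - y0 * z')) := by rw [mul_assoc]
      rw [key]
      exact genIdeal_mul_left H r (c1 z hz z' hz' x0 y0)
    · have key : (r * (z * x0 - x0 * z)) * (r' * (z' * y0 - y0 * z')) =
          r * ((z * x0 - x0 * z) * (r' * (z' * y0 - y0 * z'))) := by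
        rw [mul_assoc]
      rw [key]
      exact genIdeal_mul_left H r (hb z hz z' hz' x0 r' y0)

include hBright hZB in
theorem F5R : genIdeal Z ≤ B ⊔ brIdealR Z := by
  refine (closure_le _).2 ?_
  intro q hq
  obtain ⟨z, hz, (rfl | ⟨v, rfl⟩ | ⟨u, rfl⟩ | ⟨u, v, rfl⟩)⟩ := mem_genSet.1 hq
  · exact mem_sup_left (hZB hz)
  · exact mem_sup_left (hBright z (hZB hz) v)
  · have key : u * z = z * u - (z * u - u * z) := by noncomm_ring
    rw [key]
    exact sub_mem (mem_sup_left (hBright z (hZB hz) u)) (mem_sup_right (brR_mem Z hz u))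
  · have key : u * z * v = z * (u * v) - (z * u - u * z) * v := by noncomm_ring
    rw [key]
    exact sub_mem (mem_sup_left (hBright z (hZB hz) (u * v)))
      (mem_sup_right (brIdealR_mul_right Z v (brR_mem Z hz u)))

end RightAbstract

theorem core_right (A B : AddSubgroup R)
    (hAmul : ∀ a ∈ A, ∀ b ∈ A, a * b ∈ A) (hBmul : ∀ a ∈ B, ∀ b ∈ B, a * b ∈ B)
    {m n : ℕ} (hA : LieNilpotentClassLe (A : Set R) m) (hB : LieNilpotentClassLe (B : Set R) n)
    (hsum : A ⊔ B = ⊤) (hBright : ∀ b ∈ B, ∀ r : R, b * r ∈ B) :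
    ∃ s : ℕ, derSeries (⊤ : AddSubgroup R) s = ⊥ := by
  have hlamle : ∀ k, lam B k ≤ B := lam_le B hBmul
  have hbrk : ∀ k, ∀ z ∈ lam B k, ∀ b ∈ B, z * b - b * z ∈ lam B (k + 1) :=
    fun k z hz b hb => subset_closure ⟨z, hz, b, hb, rfl⟩
  have hDA : derSeries A m = ⊥ := derSeries_bot_of_class A hA
  have hDB : derSeries B n = ⊥ := derSeries_bot_of_class B hB
  have hlamn : lam B n = ⊥ := lam_class_bot B hB
  have hIid : ∀ Z : AddSubgroup R, IsId (genIdeal Z) := fun Z =>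
    ⟨fun r _ hx => genIdeal_mul_left Z r hx, fun r _ hx => genIdeal_mul_right Z r hx⟩
  have hKid : ∀ Z : AddSubgroup R, IsId (brIdealR Z) := fun Z =>
    ⟨fun r _ hx => brIdealR_mul_left Z r hx, fun r _ hx => brIdealR_mul_right Z r hx⟩
  have base : derSeries (⊤ : AddSubgroup R) m ≤ genIdeal (lam B 0) := by
    have h0 : derSeries (⊤ : AddSubgroup R) 0 ≤ A ⊔ genIdeal (lam B 0) := by
      show (⊤ : AddSubgroup R) ≤ _
      rw [← hsum]
      exact sup_le_sup_left (le_genIdeal B) A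
    have hchain := derSeries_chain (⊤ : AddSubgroup R)
      (fun j => derSeries A j ⊔ genIdeal (lam B 0)) 0 h0
      (fun j => bracket_sup_step (hIid _)
        (fun p hp p' hp' => subset_closure ⟨p, hp, p', hp', rfl⟩))
    have := hchain m
    rw [zero_add] at this
    simp only [hDA, bot_sup_eq] at this
    exact this
  have step : ∀ k s, derSeries (⊤ : AddSubgroup R) s ≤ genIdeal (lam B k) →
      derSeries (⊤ : AddSubgroup R) (s + n + 1) ≤ genIdeal (lam B (k + 1)) := by
    intro k s hs
    have hQ : IsId (brIdealR (lam B k) ⊔ genIdeal (lam B (k + 1))) := (hKid _).sup (hIid _)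
    have h0 : derSeries (⊤ : AddSubgroup R) s ≤
        derSeries B 0 ⊔ (brIdealR (lam B k) ⊔ genIdeal (lam B (k + 1))) := by
      refine le_trans hs (le_trans (F5R hBright (hlamle k)) ?_)
      exact sup_le_sup_left le_sup_left B
    have hchain := derSeries_chain (⊤ : AddSubgroup R)
      (fun j => derSeries B j ⊔ (brIdealR (lam B k) ⊔ genIdeal (lam B (k + 1)))) s h0
      (fun j => bracket_sup_step hQ
        (fun p hp p' hp' => subset_closure ⟨p, hp, p', hp', rfl⟩))
    have hn : derSeries (⊤ : AddSubgroup R) (s + n) ≤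
        brIdealR (lam B k) ⊔ genIdeal (lam B (k + 1)) := by
      have := hchain n
      simp only [hDB, bot_sup_eq] at this
      exact this
    have hQQ : ∀ x ∈ brIdealR (lam B k) ⊔ genIdeal (lam B (k + 1)),
        ∀ y ∈ brIdealR (lam B k) ⊔ genIdeal (lam B (k + 1)),
        x * y ∈ genIdeal (lam B (k + 1)) := by
      intro x hx y hy
      obtain ⟨c, hc, i, hi, rfl⟩ := (AddSubgroup.mem_sup).1 hx
      obtain ⟨c', hc', i', hi', rfl⟩ := (AddSubgroup.mem_sup).1 hy
      have h1 : c * c' ∈ genIdeal (lam B (k + 1)) := KKR hBright (hlamle k) (hbrk k) hc hc'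
      have key : (c + i) * (c' + i') = c * c' + (c * i' + (i * c' + i * i')) := by noncomm_ring
      rw [key]
      exact add_mem h1 (add_mem ((hIid _).1 c hi')
        (add_mem ((hIid _).2 c' hi) ((hIid _).2 i' hi)))
    show derSeries (⊤ : AddSubgroup R) ((s + n) + 1) ≤ _
    refine (closure_le _).2 ?_
    rintro x ⟨a, ha, b, hb, rfl⟩
    exact sub_mem (hQQ a (hn ha) b (hn hb)) (hQQ b (hn hb) a (hn ha))
  have iter : ∀ k, derSeries (⊤ : AddSubgroup R) (m + k * (n + 1)) ≤ genIdeal (lam B k) := by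
    intro k
    induction k with
    | zero => simpa using base
    | succ k ih =>
      have := step k _ ih
      have e : m + k * (n + 1) + n + 1 = m + (k + 1) * (n + 1) := by ring
      rwa [e] at this
  refine ⟨m + n * (n + 1), ?_⟩
  have := iter n
  rw [hlamn, genIdeal_bot] at this
  exact le_antisymm this bot_le


end Work

end LieSolvableProof

/-- **Corollary of Theorem 1.** If `R = A + B` is a sum of Lie nilpotent
subrings `A`, `B` and at least one of them is a one-sided ideal of `R`, then `R` is
Lie solvable. -/
theorem sum_of_lie_nilpotent_is_lie_solvable {R : Type*} [Ring R] (A B : AddSubgroup R)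
    (hAmul : ∀ a ∈ A, ∀ b ∈ A, a * b ∈ A) (hBmul : ∀ a ∈ B, ∀ b ∈ B, a * b ∈ B)
    (hA : ∃ m, LieNilpotentClassLe (A : Set R) m)
    (hB : ∃ m, LieNilpotentClassLe (B : Set R) m)
    (hsum : A ⊔ B = ⊤)
    (hideal : (IsLeftIdealSG A ∨ IsRightIdealSG A) ∨ (IsLeftIdealSG B ∨ IsRightIdealSG B)) :
    ∃ s : ℕ, derSeries (⊤ : AddSubgroup R) s = ⊥ := by
  obtain ⟨m, hAm⟩ := hA
  obtain ⟨n, hBn⟩ := hB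
  rcases hideal with (hL | hR) | (hL | hR)
  · exact Work.core_left B A hBmul hAmul hBn hAm (by rw [sup_comm]; exact hsum) hL
  · exact Work.core_right B A hBmul hAmul hBn hAm (by rw [sup_comm]; exact hsum) hR
  · exact Work.core_left A B hAmul hBmul hAm hBn hsum hL
  · exact Work.core_right A B hAmul hBmul hAm hBn hsum hR
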